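/- arXiv:2002.01509 — 2 statements merged into one kernel-verified Lean document; each statement's English description precedes it below -/
import Mathlib

section
/- Let X and Y be discrete real random variables taking values in [α, β] with α < β, and suppose the conditional expectation E[Y | X] ≤ 0 almost surely. Then for every λ > 0, E[exp(λ(X + Y))] ≤ exp(λ²(β − α)²/8) · E[exp(λX)]. -/
open MeasureTheory ProbabilityTheory

open Real in
private lemma bern_mgf {p q : ℝ} (hp : 0 ≤ p) (hq : 0 ≤ q) (hpq : p + q = 1)
    {u : ℝ} (hu : 0 ≤ u) : p + q * exp u ≤ exp (q * u + u ^ 2 / 8) := by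
  have hpos : ∀ v : ℝ, 0 < p + q * exp v := by
    intro v
    rcases eq_or_lt_of_le hq with h | h
    · have : p = 1 := by linarith
      positivity
    · positivity
  -- inner function and its derivatives
  set g : ℝ → ℝ := fun v => q + v / 4 - q * exp v / (p + q * exp v) with hg
  set f : ℝ → ℝ := fun v => q * v + v ^ 2 / 8 - Real.log (p + q * exp v) with hf
  have hgd : ∀ v : ℝ, HasDerivAt g (1 / 4 - p * q * exp v / (p + q * exp v) ^ 2) v := by
    intro v
    have h1 : HasDerivAt (fun v => q * exp v) (q * exp v) v := (Real.hasDerivAt_exp v).const_mul q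
    have h2 : HasDerivAt (fun v => p + q * exp v) (q * exp v) v := h1.const_add p
    have h3 : HasDerivAt (fun v => q * exp v / (p + q * exp v))
        ((q * exp v * (p + q * exp v) - q * exp v * (q * exp v)) / (p + q * exp v) ^ 2) v :=
      h1.div h2 (hpos v).ne'
    have h4 : HasDerivAt (fun v => q + v / 4) (1 / 4) v := by
      simpa using ((hasDerivAt_id v).div_const 4).const_add q
    have := h4.sub h3
    exact this.congr_deriv (by ring)
  have hfd : ∀ v : ℝ, HasDerivAt f (g v) v := by
    intro v
    have h1 : HasDerivAt (fun v => q * exp v) (q * exp v) v := (Real.hasDerivAt_exp v).const_mul q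
    have h2 : HasDerivAt (fun v => p + q * exp v) (q * exp v) v := h1.const_add p
    have h3 : HasDerivAt (fun v => Real.log (p + q * exp v)) (q * exp v / (p + q * exp v)) v :=
      h2.log (hpos v).ne'
    have h4 : HasDerivAt (fun v => q * v + v ^ 2 / 8) (q + v / 4) v := by
      have : HasDerivAt (fun v : ℝ => q * v + v ^ 2 / 8) (q * 1 + 2 * v ^ 1 / 8) v := by
        exact ((hasDerivAt_id v).const_mul q).add ((hasDerivAt_pow 2 v).div_const 8)
      convert this using 1; ring
    exact h4.sub h3
  have hgmono : MonotoneOn g (Set.Ici (0:ℝ)) := by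
    apply monotoneOn_of_deriv_nonneg (convex_Ici 0)
      (fun v _ => (hgd v).continuousAt.continuousWithinAt)
      (fun v _ => (hgd v).differentiableAt.differentiableWithinAt)
    intro v _
    rw [(hgd v).deriv]
    have h4 : 4 * (p * q * exp v) ≤ (p + q * exp v) ^ 2 := by
      nlinarith [sq_nonneg (p - q * exp v), exp_pos v]
    rw [sub_nonneg, div_le_iff₀ (pow_pos (hpos v) 2)]
    nlinarith
  have hg0 : g 0 = 0 := by simp [hg, hpq]
  have hgnn : ∀ v ∈ Set.Ici (0:ℝ), 0 ≤ g v := by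
    intro v hv
    calc (0:ℝ) = g 0 := hg0.symm
    _ ≤ g v := hgmono (Set.self_mem_Ici) hv hv
  have hfmono : MonotoneOn f (Set.Ici (0:ℝ)) := by
    apply monotoneOn_of_deriv_nonneg (convex_Ici 0)
      (fun v _ => (hfd v).continuousAt.continuousWithinAt)
      (fun v _ => (hfd v).differentiableAt.differentiableWithinAt)
    intro v hv
    rw [(hfd v).deriv]
    exact hgnn v (le_of_lt (by simpa using hv))
  have hf0 : f 0 = 0 := by simp [hf, hpq]
  have hfnn : 0 ≤ f u := by
    calc (0:ℝ) = f 0 := hf0.symm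
    _ ≤ f u := hfmono Set.self_mem_Ici hu hu
  have : Real.log (p + q * exp u) ≤ q * u + u ^ 2 / 8 := by
    simp only [hf] at hfnn; linarith
  calc p + q * exp u = exp (Real.log (p + q * exp u)) := (exp_log (hpos u)).symm
  _ ≤ exp (q * u + u ^ 2 / 8) := exp_le_exp.mpr this

open Real in
private lemma hoeff {Ω : Type*} [MeasurableSpace Ω] (ν : Measure Ω) [IsProbabilityMeasure ν]
    (Y : Ω → ℝ) (hY : Measurable Y) (a b t : ℝ) (hab : a < b) (ht : 0 < t)
    (hrange : ∀ ω, Y ω ∈ Set.Icc a b) (hmean : ∫ ω, Y ω ∂ν ≤ 0) :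
    ∫ ω, exp (t * Y ω) ∂ν ≤ exp (t ^ 2 * (b - a) ^ 2 / 8) := by
  have hba : 0 < b - a := by linarith
  have hYint : Integrable Y ν := by
    apply (integrable_const (max |a| |b|)).mono' hY.aestronglyMeasurable
    filter_upwards with ω
    have h := hrange ω
    rw [Real.norm_eq_abs, abs_le]
    constructor
    · calc -(max |a| |b|) ≤ -|a| := by simp
      _ ≤ a := neg_abs_le a
      _ ≤ Y ω := h.1
    · calc Y ω ≤ b := h.2
      _ ≤ |b| := le_abs_self b
      _ ≤ max |a| |b| := le_max_right _ _
  have hexpint : Integrable (fun ω => exp (t * Y ω)) ν := by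
    apply (integrable_const (exp (t * b))).mono' (hY.const_mul t).exp.aestronglyMeasurable
    filter_upwards with ω
    rw [Real.norm_eq_abs, abs_of_pos (exp_pos _), exp_le_exp]
    exact mul_le_mul_of_nonneg_left (hrange ω).2 ht.le
  rcases le_or_gt b 0 with hb | hb
  · -- trivial case
    calc ∫ ω, exp (t * Y ω) ∂ν ≤ ∫ _ω, (1:ℝ) ∂ν := by
          apply integral_mono hexpint (integrable_const 1)
          intro ω
          rw [← Real.exp_zero]
          exact exp_le_exp.mpr (mul_nonpos_of_nonneg_of_nonpos ht.le (le_trans (hrange ω).2 hb))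
    _ = 1 := by simp
    _ ≤ exp (t ^ 2 * (b - a) ^ 2 / 8) := by rw [← Real.exp_zero]; apply exp_le_exp.mpr; positivity
  · set m := ∫ ω, Y ω ∂ν with hm
    have ha0 : a ≤ 0 := by
      have : a ≤ m := by
        rw [hm]
        calc a = ∫ _ω, a ∂ν := by simp
        _ ≤ ∫ ω, Y ω ∂ν := integral_mono (integrable_const a) hYint fun ω => (hrange ω).1
      linarith
    -- convexity bound pointwise
    have hconv : ∀ ω, exp (t * Y ω) ≤
        (b - Y ω) / (b - a) * exp (t * a) + (Y ω - a) / (b - a) * exp (t * b) := by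
      intro ω
      have h := hrange ω
      have hs : 0 ≤ (b - Y ω) / (b - a) := by
        apply div_nonneg _ hba.le; linarith [h.2]
      have hr : 0 ≤ (Y ω - a) / (b - a) := by
        apply div_nonneg _ hba.le; linarith [h.1]
      have hsr : (b - Y ω) / (b - a) + (Y ω - a) / (b - a) = 1 := by
        field_simp
        ring
      have key := (convexOn_exp.2 (Set.mem_univ (t * a)) (Set.mem_univ (t * b)) hs hr hsr)
      simp only [smul_eq_mul] at key
      have harg : (b - Y ω) / (b - a) * (t * a) + (Y ω - a) / (b - a) * (t * b) = t * Y ω := by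
        field_simp; ring
      rw [harg] at key
      exact key
    have hint2 : Integrable (fun ω => (b - Y ω) / (b - a) * exp (t * a)
        + (Y ω - a) / (b - a) * exp (t * b)) ν := by
      apply Integrable.add
      · exact ((((integrable_const b).sub hYint).div_const (b-a)).mul_const _)
      · exact ((hYint.sub (integrable_const a)).div_const (b-a)).mul_const _
    have step1 : ∫ ω, exp (t * Y ω) ∂ν ≤
        (b - m) / (b - a) * exp (t * a) + (m - a) / (b - a) * exp (t * b) := by
      calc ∫ ω, exp (t * Y ω) ∂ν
          ≤ ∫ ω, ((b - Y ω) / (b - a) * exp (t * a) + (Y ω - a) / (b - a) * exp (t * b)) ∂ν :=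
            integral_mono hexpint hint2 hconv
      _ = (b - m) / (b - a) * exp (t * a) + (m - a) / (b - a) * exp (t * b) := by
            have i1 : Integrable (fun ω => (b - Y ω) / (b - a) * exp (t * a)) ν := by
              simpa using ((((integrable_const b).sub hYint).div_const (b-a)).mul_const
                (exp (t * a)))
            have i2 : Integrable (fun ω => (Y ω - a) / (b - a) * exp (t * b)) ν := by
              simpa using (((hYint.sub (integrable_const a)).div_const (b-a)).mul_const
                (exp (t * b)))
            rw [integral_add i1 i2, integral_mul_const, integral_mul_const,
              integral_div, integral_div,
              integral_sub (integrable_const b) hYint, integral_sub hYint (integrable_const a)]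
            simp [hm]
    have step2 : (b - m) / (b - a) * exp (t * a) + (m - a) / (b - a) * exp (t * b) ≤
        b / (b - a) * exp (t * a) + (-a) / (b - a) * exp (t * b) := by
      have hee : exp (t * a) ≤ exp (t * b) := exp_le_exp.mpr (by nlinarith)
      have hm0 : m ≤ 0 := hmean
      have key : m * (exp (t * b) - exp (t * a)) ≤ 0 :=
        mul_nonpos_of_nonpos_of_nonneg hm0 (sub_nonneg.mpr hee)
      rw [div_mul_eq_mul_div, div_mul_eq_mul_div, ← add_div,
        div_mul_eq_mul_div, div_mul_eq_mul_div, ← add_div,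
        div_le_div_iff_of_pos_right hba]
      nlinarith [key]
    -- final step via bern_mgf
    have hp : 0 ≤ b / (b - a) := by positivity
    have hq : 0 ≤ (-a) / (b - a) := by
      apply div_nonneg (by linarith) hba.le
    have hpq : b / (b - a) + (-a) / (b - a) = 1 := by field_simp; ring
    have hu : (0:ℝ) ≤ t * (b - a) := by positivity
    have hB := bern_mgf hp hq hpq hu
    have hB2 := mul_le_mul_of_nonneg_left hB (exp_pos (t * a)).le
    have hl : exp (t * a) * (b / (b - a) + (-a) / (b - a) * exp (t * (b - a)))
        = b / (b - a) * exp (t * a) + (-a) / (b - a) * exp (t * b) := by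
      have h0 : t * a + t * (b - a) = t * b := by ring
      rw [mul_add, mul_comm (exp (t*a)) (b/(b-a)),
        mul_left_comm (exp (t*a)) ((-a)/(b-a)), ← Real.exp_add, h0]
    have hr : exp (t * a) * exp ((-a) / (b - a) * (t * (b - a)) + (t * (b - a)) ^ 2 / 8)
        = exp (t ^ 2 * (b - a) ^ 2 / 8) := by
      rw [← Real.exp_add]
      congr 1
      field_simp
      ring
    rw [hl, hr] at hB2
    linarith [step1, step2, hB2]

open Real in
theorem stmt8 {Ω : Type*} [MeasurableSpace Ω] (μ : Measure Ω) [IsProbabilityMeasure μ]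
    (X Y : Ω → ℝ) (α β L : ℝ) (hαβ : α < β) (hL : 0 < L)
    (hX : Measurable X) (hY : Measurable Y)
    (hXc : (Set.range X).Countable) (hYc : (Set.range Y).Countable)
    (hXrange : ∀ ω, X ω ∈ Set.Icc α β) (hYrange : ∀ ω, Y ω ∈ Set.Icc α β)
    (hcond : ∀ x : ℝ, μ (X ⁻¹' {x}) ≠ 0 → ∫ ω, Y ω ∂(μ[|X ⁻¹' {x}]) ≤ 0) :
    ∫ ω, Real.exp (L * (X ω + Y ω)) ∂μ ≤
      Real.exp (L ^ 2 * (β - α) ^ 2 / 8) * ∫ ω, Real.exp (L * X ω) ∂μ := by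
  set C := Real.exp (L ^ 2 * (β - α) ^ 2 / 8) with hC
  haveI : Countable ↥(Set.range X) := hXc.to_subtype
  set A : Set.range X → Set Ω := fun x => X ⁻¹' {(x : ℝ)} with hA
  have hAm : ∀ x, MeasurableSet (A x) := fun x => hX (measurableSet_singleton _)
  have hAd : Pairwise (Function.onFun Disjoint A) := by
    intro x y hxy
    apply Set.disjoint_left.mpr
    intro ω h1 h2
    simp only [hA, Set.mem_preimage, Set.mem_singleton_iff] at h1 h2
    exact hxy (Subtype.ext (h1 ▸ h2))
  have hAu : ⋃ x, A x = Set.univ := by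
    ext ω
    simp only [hA, Set.mem_iUnion, Set.mem_preimage, Set.mem_singleton_iff, Set.mem_univ,
      iff_true]
    exact ⟨⟨X ω, Set.mem_range_self ω⟩, rfl⟩
  -- integrability
  have hfint : Integrable (fun ω => Real.exp (L * (X ω + Y ω))) μ := by
    apply (integrable_const (Real.exp (L * (β + β)))).mono'
      ((hX.add hY).const_mul L).exp.aestronglyMeasurable
    filter_upwards with ω
    rw [Real.norm_eq_abs, abs_of_pos (exp_pos _), exp_le_exp]
    exact mul_le_mul_of_nonneg_left (add_le_add (hXrange ω).2 (hYrange ω).2) hL.le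
  have hgint : Integrable (fun ω => Real.exp (L * X ω)) μ := by
    apply (integrable_const (Real.exp (L * β))).mono' (hX.const_mul L).exp.aestronglyMeasurable
    filter_upwards with ω
    rw [Real.norm_eq_abs, abs_of_pos (exp_pos _), exp_le_exp]
    exact mul_le_mul_of_nonneg_left (hXrange ω).2 hL.le
  have hsum_f : HasSum (fun x => ∫ ω in A x, Real.exp (L * (X ω + Y ω)) ∂μ)
      (∫ ω, Real.exp (L * (X ω + Y ω)) ∂μ) := by
    have hon : IntegrableOn (fun ω => Real.exp (L * (X ω + Y ω))) (⋃ x, A x) μ := by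
      rw [hAu]; exact hfint.integrableOn
    have h := hasSum_integral_iUnion hAm hAd hon
    rwa [hAu, setIntegral_univ] at h
  have hsum_g : HasSum (fun x => ∫ ω in A x, Real.exp (L * X ω) ∂μ)
      (∫ ω, Real.exp (L * X ω) ∂μ) := by
    have hon : IntegrableOn (fun ω => Real.exp (L * X ω)) (⋃ x, A x) μ := by
      rw [hAu]; exact hgint.integrableOn
    have h := hasSum_integral_iUnion hAm hAd hon
    rwa [hAu, setIntegral_univ] at h
  have key : ∀ x : Set.range X, ∫ ω in A x, Real.exp (L * (X ω + Y ω)) ∂μ ≤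
      C * ∫ ω in A x, Real.exp (L * X ω) ∂μ := by
    intro x
    rcases eq_or_ne (μ (A x)) 0 with h0 | h0
    · rw [show μ.restrict (A x) = 0 from Measure.restrict_eq_zero.mpr h0]
      simp
    · haveI : IsProbabilityMeasure (μ[|A x]) := cond_isProbabilityMeasure h0
      have hfin : (μ (A x)).toReal ≠ 0 :=
        ENNReal.toReal_ne_zero.mpr ⟨h0, measure_ne_top μ _⟩
      have htR : 0 ≤ (μ (A x)).toReal := ENNReal.toReal_nonneg
      have e2 : ∀ f : Ω → ℝ, ∫ ω in A x, f ω ∂μ = (μ (A x)).toReal * ∫ ω, f ω ∂(μ[|A x]) := by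
        intro f
        rw [ProbabilityTheory.cond, integral_smul_measure, ENNReal.toReal_inv, smul_eq_mul,
          ← mul_assoc, mul_inv_cancel₀ hfin, one_mul]
      have e1 : ∫ ω in A x, Real.exp (L * (X ω + Y ω)) ∂μ
          = ∫ ω in A x, Real.exp (L * (x : ℝ)) * Real.exp (L * Y ω) ∂μ := by
        apply setIntegral_congr_fun (hAm x)
        intro ω hω
        simp only [hA, Set.mem_preimage, Set.mem_singleton_iff] at hω
        dsimp only
        rw [← Real.exp_add, hω]
        ring_nf
      have e3 : ∫ ω in A x, Real.exp (L * X ω) ∂μ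
          = (μ (A x)).toReal * Real.exp (L * (x : ℝ)) := by
        rw [show ∫ ω in A x, Real.exp (L * X ω) ∂μ
            = ∫ _ω in A x, Real.exp (L * (x : ℝ)) ∂μ from
          setIntegral_congr_fun (hAm x) (by
            intro ω hω
            simp only [hA, Set.mem_preimage, Set.mem_singleton_iff] at hω
            dsimp only
            rw [hω])]
        rw [setIntegral_const, smul_eq_mul, measureReal_def]
      have hhoeff : ∫ ω, Real.exp (L * Y ω) ∂(μ[|A x]) ≤ C :=
        hoeff (μ[|A x]) Y hY α β L hαβ hL hYrange (hcond x h0)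
      rw [e1, e3, MeasureTheory.integral_const_mul, e2]
      have := mul_le_mul_of_nonneg_left hhoeff
        (mul_nonneg (exp_pos (L * (x:ℝ))).le htR)
      nlinarith [this]
  calc ∫ ω, Real.exp (L * (X ω + Y ω)) ∂μ
      = ∑' x, ∫ ω in A x, Real.exp (L * (X ω + Y ω)) ∂μ := hsum_f.tsum_eq.symm
  _ ≤ ∑' x, C * ∫ ω in A x, Real.exp (L * X ω) ∂μ :=
      Summable.tsum_le_tsum key hsum_f.summable (hsum_g.summable.mul_left C)
  _ = C * ∑' x, ∫ ω in A x, Real.exp (L * X ω) ∂μ := tsum_mul_left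
  _ = C * ∫ ω, Real.exp (L * X ω) ∂μ := by rw [hsum_g.tsum_eq]
end

section
/- Let X_1, ..., X_n be discrete random variables taking values in [0,1], let γ ∈ [0,1], and suppose that E[X_k | X_1, ..., X_{k−1}] ≤ γ almost surely for every k ∈ {1, ..., n}. Then for every ε > 0, Pr(X_1 + ··· + X_n ≥ (γ + ε)n) ≤ exp(−2nε²). -/
open MeasureTheory ProbabilityTheory Real

lemma my_D_pos {m : ℝ} (hm0 : 0 ≤ m) (hm1 : m ≤ 1) (x : ℝ) :
    0 < 1 + (Real.exp x - 1) * m := by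
  nlinarith [Real.exp_pos x, mul_nonneg hm0 (Real.exp_pos x).le,
    mul_nonneg (sub_nonneg.2 hm1) (Real.exp_pos x).le]

lemma my_analytic {m : ℝ} (hm0 : 0 ≤ m) (hm1 : m ≤ 1) {t : ℝ} (ht : 0 ≤ t) :
    1 + (Real.exp t - 1) * m ≤ Real.exp (t * m + t ^ 2 / 8) := by
  have hD := my_D_pos hm0 hm1
  set D : ℝ → ℝ := fun x => 1 + (Real.exp x - 1) * m with hDdef
  have hDd : ∀ x, HasDerivAt D (Real.exp x * m) x := by
    intro x
    exact (((Real.hasDerivAt_exp x).sub_const 1).mul_const m).const_add 1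
  set g : ℝ → ℝ := fun x => Real.exp x * m / D x with hgdef
  have hgd : ∀ x, HasDerivAt g (g x * (1 - g x)) x := by
    intro x
    have h := (((Real.hasDerivAt_exp x).mul_const m).div (hDd x) (hD x).ne')
    have heq : (Real.exp x * m * D x - Real.exp x * m * (Real.exp x * m)) / D x ^ 2
        = g x * (1 - g x) := by
      have hne : (1 + (Real.exp x - 1) * m) ≠ 0 := (hD x).ne'
      have hne' : D x ≠ 0 := (hD x).ne'
      show _ = Real.exp x * m / D x * (1 - Real.exp x * m / D x)
      field_simp
    exact heq ▸ h
  set ψ : ℝ → ℝ := fun x => m + x / 4 - g x with hψdef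
  have hψd : ∀ x, HasDerivAt ψ (1 / 4 - g x * (1 - g x)) x := by
    intro x
    exact ((hasDerivAt_id x).div_const 4).const_add m |>.sub (hgd x)
  have hψmono : Monotone ψ := by
    apply monotone_of_deriv_nonneg
    · exact fun x => ((hψd x).differentiableAt)
    · intro x
      rw [(hψd x).deriv]
      nlinarith [sq_nonneg (g x - 1 / 2)]
  have hψ0 : ψ 0 = 0 := by
    simp [hψdef, hgdef, hDdef]
  have hψnn : ∀ x, 0 ≤ x → 0 ≤ ψ x := fun x hx => hψ0 ▸ hψmono hx
  set φ : ℝ → ℝ := fun x => x * m + x ^ 2 / 8 - Real.log (D x) with hφdef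
  have hφd : ∀ x, HasDerivAt φ (ψ x) x := by
    intro x
    have h1 : HasDerivAt (fun x : ℝ => x * m + x ^ 2 / 8) (m + x / 4) x := by
      have := ((hasDerivAt_id x).mul_const m).add ((hasDerivAt_pow 2 x).div_const 8)
      refine this.congr_deriv ?_
      rw [show (2:ℕ) - 1 = 1 from rfl]
      push_cast
      ring
    have h2 : HasDerivAt (fun x => Real.log (D x)) (Real.exp x * m / D x) x :=
      (hDd x).log (hD x).ne'
    exact h1.sub h2
  have hφmono : MonotoneOn φ (Set.Ici 0) := by
    apply monotoneOn_of_deriv_nonneg (convex_Ici 0)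
    · exact Continuous.continuousOn (by
        fun_prop (disch := intro x; exact (hD x).ne'))
    · intro x _
      exact (hφd x).differentiableAt.differentiableWithinAt
    · intro x hx
      rw [(hφd x).deriv]
      exact hψnn x (le_of_lt (by simpa using hx))
  have hφ0 : φ 0 = 0 := by simp [hφdef, hDdef]
  have hφt : 0 ≤ φ t := hφ0 ▸ hφmono (le_refl (0:ℝ) : (0:ℝ) ∈ Set.Ici 0) (Set.mem_Ici.2 ht) ht
  have : Real.log (D t) ≤ t * m + t ^ 2 / 8 := by
    have := hφt
    simp only [hφdef] at this
    linarith
  exact (Real.log_le_iff_le_exp (hD t)).mp this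

lemma my_integrable_of_bdd {Ω : Type*} [MeasurableSpace Ω] {ν : Measure Ω} [IsFiniteMeasure ν]
    {f : Ω → ℝ} (hf : Measurable f) (C : ℝ) (h : ∀ ω, |f ω| ≤ C) : Integrable f ν :=
  (integrable_const C).mono' hf.aestronglyMeasurable (Filter.Eventually.of_forall h)

lemma my_hoeffding {Ω : Type*} [MeasurableSpace Ω] (ν : Measure Ω) [IsProbabilityMeasure ν]
    (Y : Ω → ℝ) (hY : Measurable Y) (hr : ∀ ω, Y ω ∈ Set.Icc (0 : ℝ) 1)
    {t : ℝ} (ht : 0 ≤ t) :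
    ∫ ω, Real.exp (t * Y ω) ∂ν ≤ Real.exp (t * (∫ ω, Y ω ∂ν) + t ^ 2 / 8) := by
  have hYint : Integrable Y ν :=
    my_integrable_of_bdd hY 1 (fun ω => abs_le.2 ⟨by linarith [(hr ω).1], (hr ω).2⟩)
  have hm0 : 0 ≤ ∫ ω, Y ω ∂ν := integral_nonneg fun ω => (hr ω).1
  have hm1 : (∫ ω, Y ω ∂ν) ≤ 1 := by
    calc (∫ ω, Y ω ∂ν) ≤ ∫ _, (1 : ℝ) ∂ν :=
          integral_mono hYint (integrable_const 1) (fun ω => (hr ω).2)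
      _ = 1 := by simp
  have hconv : ∀ ω, Real.exp (t * Y ω) ≤ 1 + (Real.exp t - 1) * Y ω := by
    intro ω
    have h := convexOn_exp.2 (Set.mem_univ (0 : ℝ)) (Set.mem_univ t)
      (by linarith [(hr ω).2] : 0 ≤ 1 - Y ω) (hr ω).1 (by ring)
    simp only [smul_eq_mul, mul_zero, zero_add, Real.exp_zero, mul_one] at h
    calc Real.exp (t * Y ω) = Real.exp (Y ω * t) := by rw [mul_comm]
    _ ≤ (1 - Y ω) * 1 + Y ω * Real.exp t := by simpa using h
    _ = 1 + (Real.exp t - 1) * Y ω := by ring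
  have hexpint : Integrable (fun ω => Real.exp (t * Y ω)) ν := by
    apply my_integrable_of_bdd (by fun_prop) (Real.exp t)
    intro ω
    rw [abs_of_nonneg (Real.exp_nonneg _)]
    exact Real.exp_le_exp.2 (by nlinarith [(hr ω).1, (hr ω).2])
  calc ∫ ω, Real.exp (t * Y ω) ∂ν ≤ ∫ ω, (1 + (Real.exp t - 1) * Y ω) ∂ν :=
        integral_mono hexpint ((integrable_const 1).add (hYint.const_mul _)) hconv
    _ = 1 + (Real.exp t - 1) * ∫ ω, Y ω ∂ν := by
        rw [integral_add (integrable_const 1) (hYint.const_mul _), integral_const,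
          integral_const_mul]
        simp
    _ ≤ Real.exp (t * (∫ ω, Y ω ∂ν) + t ^ 2 / 8) := my_analytic hm0 hm1 ht
open MeasureTheory ProbabilityTheory

theorem stmt9 {Ω : Type*} [MeasurableSpace Ω] (μ : Measure Ω) [IsProbabilityMeasure μ]
    (n : ℕ) (X : Fin n → Ω → ℝ) (γ ε : ℝ)
    (hX : ∀ k, Measurable (X k)) (hXc : ∀ k, (Set.range (X k)).Countable)
    (hrange : ∀ k ω, X k ω ∈ Set.Icc (0 : ℝ) 1)
    (hγ : γ ∈ Set.Icc (0 : ℝ) 1) (hε : 0 < ε)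
    (hcond : ∀ (k : Fin n) (v : Fin n → ℝ),
      μ {ω | ∀ j : Fin n, j < k → X j ω = v j} ≠ 0 →
      ∫ ω, X k ω ∂(μ[|{ω | ∀ j : Fin n, j < k → X j ω = v j}]) ≤ γ) :
    (μ {ω | (γ + ε) * n ≤ ∑ j, X j ω}).toReal ≤ Real.exp (-2 * n * ε ^ 2) := by
  obtain ⟨hγ0, hγ1⟩ := hγ
  set t : ℝ := 4 * ε with htdef
  have ht : 0 ≤ t := by positivity
  set b : ℝ := t * γ + t ^ 2 / 8 with hbdef
  have hSmeas : ∀ m : ℕ,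
      Measurable (fun ω => ∑ j : Fin n, if (j : ℕ) < m then X j ω else 0) := by
    intro m
    apply Finset.measurable_sum
    intro j _
    by_cases hj : (j : ℕ) < m
    · simpa [hj] using hX j
    · simp [hj]
  have hS0 : ∀ (m : ℕ) (ω : Ω), 0 ≤ ∑ j : Fin n, if (j : ℕ) < m then X j ω else 0 := by
    intro m ω
    apply Finset.sum_nonneg
    intro j _
    by_cases hj : (j : ℕ) < m
    · simpa [hj] using (hrange j ω).1
    · simp [hj]
  have hSn : ∀ (m : ℕ) (ω : Ω), (∑ j : Fin n, if (j : ℕ) < m then X j ω else 0) ≤ n := by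
    intro m ω
    calc (∑ j : Fin n, if (j : ℕ) < m then X j ω else 0) ≤ ∑ _j : Fin n, (1 : ℝ) := by
          apply Finset.sum_le_sum
          intro j _
          by_cases hj : (j : ℕ) < m
          · simpa [hj] using (hrange j ω).2
          · simp [hj]
      _ = n := by simp
  have hexpint : ∀ m : ℕ,
      Integrable (fun ω => Real.exp (t * ∑ j : Fin n, if (j : ℕ) < m then X j ω else 0)) μ := by
    intro m
    apply my_integrable_of_bdd (((hSmeas m).const_mul t).exp)
      (Real.exp (t * n))
    intro ω
    rw [abs_of_nonneg (Real.exp_nonneg _)]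
    exact Real.exp_le_exp.2 (mul_le_mul_of_nonneg_left (hSn m ω) ht)
  have key : ∀ m : ℕ, m ≤ n →
      ∫ ω, Real.exp (t * ∑ j : Fin n, if (j : ℕ) < m then X j ω else 0) ∂μ ≤
        Real.exp (m * b) := by
    intro m
    induction m with
    | zero => intro _; simp
    | succ m ih =>
      intro hm1
      have hm : m < n := hm1
      have ihm := ih (le_of_lt hm)
      set k : Fin n := ⟨m, hm⟩ with hkdef
      set S : Ω → ℝ := fun ω => ∑ j : Fin n, if (j : ℕ) < m then X j ω else 0 with hSdef
      have hsplit : ∀ ω, (∑ j : Fin n, if (j : ℕ) < m + 1 then X j ω else 0)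
          = S ω + X k ω := by
        intro ω
        have h2 : ∀ j : Fin n, (if (j : ℕ) < m + 1 then X j ω else 0)
            = (if (j : ℕ) < m then X j ω else 0) + (if j = k then X j ω else 0) := by
          intro j
          by_cases h3 : j = k
          · have : (j : ℕ) = m := by rw [h3]
            simp [h3, this, hkdef]
          · have hjm : (j : ℕ) ≠ m := fun h => h3 (Fin.ext h)
            by_cases h1 : (j : ℕ) < m
            · simp [h1, Nat.lt_succ_of_lt h1, h3]
            · have : ¬ (j : ℕ) < m + 1 := by omega
              simp [h1, this, h3]
        rw [Finset.sum_congr rfl fun j _ => h2 j, Finset.sum_add_distrib,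
          Finset.sum_ite_eq' Finset.univ k (fun j => X j ω)]
        simp [hSdef]
      set T : Ω → (Fin n → ℝ) := fun ω j => if j < k then X j ω else 0 with hTdef
      have hVc : (Set.range T).Countable := by
        apply Set.Countable.mono ?_ (Set.countable_univ_pi (fun j => (hXc j).insert 0))
        rintro v ⟨ω, rfl⟩
        rw [Set.mem_univ_pi]
        intro j
        by_cases hj : j < k
        · simp only [hTdef, hj, if_true]
          exact Set.mem_insert_iff.2 (Or.inr (Set.mem_range_self ω))
        · simp [hTdef, hj]
      haveI : Countable (Set.range T) := hVc.to_subtype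
      set A : Set.range T → Set Ω :=
        fun v => {ω | ∀ j : Fin n, j < k → X j ω = (v : Fin n → ℝ) j} with hAdef
      have hv0 : ∀ (v : Set.range T) (j : Fin n), ¬ j < k → (v : Fin n → ℝ) j = 0 := by
        rintro ⟨v, ω₀, rfl⟩ j hj
        simp [hTdef, hj]
      have hA_pre : ∀ v : Set.range T, A v = T ⁻¹' {(v : Fin n → ℝ)} := by
        intro v
        ext ω
        simp only [hAdef, Set.mem_setOf_eq, Set.mem_preimage, Set.mem_singleton_iff]
        constructor
        · intro h
          funext j
          by_cases hj : j < k
          · simp [hTdef, hj, h j hj]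
          · simp [hTdef, hj, hv0 v j hj]
        · intro h j hj
          have := congrFun h j
          simpa [hTdef, hj] using this
      have hAm : ∀ v : Set.range T, MeasurableSet (A v) := by
        intro v
        have hAi : A v = ⋂ j : Fin n, {ω | j < k → X j ω = (v : Fin n → ℝ) j} := by
          ext ω; simp [hAdef]
        rw [hAi]
        apply MeasurableSet.iInter
        intro j
        by_cases hj : j < k
        · simp only [hj, forall_true_left]
          exact (hX j) (measurableSet_singleton _)
        · simp [hj]
      have hdisj : Pairwise (Function.onFun Disjoint A) := by
        intro v w hvw
        have : (v : Fin n → ℝ) ≠ (w : Fin n → ℝ) := Subtype.coe_injective.ne hvw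
        simp only [Function.onFun, hA_pre]
        exact (Set.disjoint_singleton.mpr this).preimage T
      have hcover : ⋃ v, A v = Set.univ := by
        ext ω
        simp only [Set.mem_iUnion, Set.mem_univ, iff_true]
        refine ⟨⟨T ω, Set.mem_range_self ω⟩, ?_⟩
        rw [hA_pre]
        exact rfl
      have hconst : ∀ (v : Set.range T), ∀ ω ∈ A v,
          S ω = ∑ j : Fin n, (v : Fin n → ℝ) j := by
        intro v ω hω
        apply Finset.sum_congr rfl
        intro j _
        by_cases hj : (j : ℕ) < m
        · have hj' : j < k := by rw [Fin.lt_def]; exact hj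
          simpa [hj] using hω j hj'
        · have hj' : ¬ j < k := by rw [Fin.lt_def]; exact hj
          simp [hj, hv0 v j hj']
      have hf_meas : Measurable (fun ω => Real.exp (t * S ω) * Real.exp (t * X k ω)) :=
        (((hSmeas m).const_mul t).exp).mul
          (((hX k).const_mul t).exp)
      have hf_int : Integrable (fun ω => Real.exp (t * S ω) * Real.exp (t * X k ω)) μ := by
        apply my_integrable_of_bdd hf_meas (Real.exp (t * n) * Real.exp t)
        intro ω
        rw [abs_of_nonneg (mul_nonneg (Real.exp_nonneg _) (Real.exp_nonneg _))]
        apply mul_le_mul _ _ (Real.exp_nonneg _) (Real.exp_nonneg _)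
        · exact Real.exp_le_exp.2 (mul_le_mul_of_nonneg_left (hSn m ω) ht)
        · exact Real.exp_le_exp.2 (by nlinarith [(hrange k ω).2])
      have hsum1 : HasSum (fun v => ∫ ω in A v, Real.exp (t * S ω) * Real.exp (t * X k ω) ∂μ)
          (∫ ω, Real.exp (t * S ω) * Real.exp (t * X k ω) ∂μ) := by
        have h := MeasureTheory.hasSum_integral_iUnion hAm hdisj
          (by rw [hcover]; exact hf_int.integrableOn)
        rwa [hcover, Measure.restrict_univ] at h
      have hsum2 : HasSum (fun v => ∫ ω in A v, Real.exp (t * S ω) ∂μ)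
          (∫ ω, Real.exp (t * S ω) ∂μ) := by
        have h := MeasureTheory.hasSum_integral_iUnion hAm hdisj
          (by rw [hcover]; exact (hexpint m).integrableOn)
        rwa [hcover, Measure.restrict_univ] at h
      have hterm : ∀ v : Set.range T,
          ∫ ω in A v, Real.exp (t * S ω) * Real.exp (t * X k ω) ∂μ ≤
            Real.exp b * ∫ ω in A v, Real.exp (t * S ω) ∂μ := by
        intro v
        set c : ℝ := Real.exp (t * ∑ j : Fin n, (v : Fin n → ℝ) j) with hcdef
        have hc0 : (0:ℝ) ≤ c := Real.exp_nonneg _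
        have hL : ∫ ω in A v, Real.exp (t * S ω) * Real.exp (t * X k ω) ∂μ
            = c * ∫ ω in A v, Real.exp (t * X k ω) ∂μ := by
          rw [← MeasureTheory.integral_const_mul]
          apply setIntegral_congr_fun (hAm v)
          intro ω hω
          show Real.exp (t * S ω) * Real.exp (t * X k ω) = c * Real.exp (t * X k ω)
          rw [hconst v ω hω, hcdef]
        have hR : ∫ ω in A v, Real.exp (t * S ω) ∂μ = c * (μ (A v)).toReal := by
          have heq : Set.EqOn (fun ω => Real.exp (t * S ω)) (fun _ => c) (A v) := by
            intro ω hω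
            show Real.exp (t * S ω) = c
            rw [hconst v ω hω, hcdef]
          rw [setIntegral_congr_fun (hAm v) heq, setIntegral_const, smul_eq_mul, mul_comm]
          rfl
        rw [hL, hR]
        by_cases hz : μ (A v) = 0
        · rw [Measure.restrict_eq_zero.mpr hz]
          simp [hz]
        · have htz : (μ (A v)).toReal ≠ 0 := by
            simp [ENNReal.toReal_eq_zero_iff, hz, measure_ne_top μ (A v)]
          haveI : IsProbabilityMeasure (μ[|A v]) := cond_isProbabilityMeasure hz
          have hcondint : ∫ ω, Real.exp (t * X k ω) ∂(μ[|A v])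
              = (μ (A v)).toReal⁻¹ * ∫ ω in A v, Real.exp (t * X k ω) ∂μ := by
            rw [ProbabilityTheory.cond, integral_smul_measure, ENNReal.toReal_inv, smul_eq_mul]
          have hmean : ∫ ω, X k ω ∂(μ[|A v]) ≤ γ := hcond k (v : Fin n → ℝ) hz
          have hbound : ∫ ω, Real.exp (t * X k ω) ∂(μ[|A v]) ≤ Real.exp b := by
            refine (my_hoeffding (μ[|A v]) (X k) (hX k) (fun ω => hrange k ω) ht).trans ?_
            apply Real.exp_le_exp.2
            have := mul_le_mul_of_nonneg_left hmean ht
            rw [hbdef]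
            linarith
          have hXI : ∫ ω in A v, Real.exp (t * X k ω) ∂μ
              = (μ (A v)).toReal * ∫ ω, Real.exp (t * X k ω) ∂(μ[|A v]) := by
            rw [hcondint]
            field_simp
          rw [hXI]
          have hint_nonneg : 0 ≤ (μ (A v)).toReal := ENNReal.toReal_nonneg
          calc c * ((μ (A v)).toReal * ∫ ω, Real.exp (t * X k ω) ∂(μ[|A v]))
              ≤ c * ((μ (A v)).toReal * Real.exp b) := by
                apply mul_le_mul_of_nonneg_left _ hc0
                exact mul_le_mul_of_nonneg_left hbound hint_nonneg
            _ = Real.exp b * (c * (μ (A v)).toReal) := by ring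
      have hfin : ∫ ω, Real.exp (t * S ω) * Real.exp (t * X k ω) ∂μ ≤
          Real.exp b * ∫ ω, Real.exp (t * S ω) ∂μ := by
        rw [← hsum1.tsum_eq, ← (hsum2.mul_left (Real.exp b)).tsum_eq]
        exact Summable.tsum_le_tsum hterm hsum1.summable (hsum2.summable.mul_left _)
      calc ∫ ω, Real.exp (t * ∑ j : Fin n, if (j : ℕ) < m + 1 then X j ω else 0) ∂μ
          = ∫ ω, Real.exp (t * S ω) * Real.exp (t * X k ω) ∂μ := by
            apply integral_congr_ae
            filter_upwards with ω
            rw [hsplit ω, mul_add, Real.exp_add]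
        _ ≤ Real.exp b * ∫ ω, Real.exp (t * S ω) ∂μ := hfin
        _ ≤ Real.exp b * Real.exp (m * b) :=
            mul_le_mul_of_nonneg_left ihm (Real.exp_nonneg _)
        _ = Real.exp ((m + 1 : ℕ) * b) := by
            rw [← Real.exp_add]
            push_cast
            ring_nf
  have hfinal := key n le_rfl
  have hsum_eq : ∀ ω : Ω, (∑ j : Fin n, if (j : ℕ) < n then X j ω else 0) = ∑ j, X j ω := by
    intro ω
    apply Finset.sum_congr rfl
    intro j _
    simp [j.isLt]
  have hint : Integrable (fun ω => Real.exp (t * ∑ j, X j ω)) μ := by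
    have := hexpint n
    apply this.congr
    filter_upwards with ω
    rw [hsum_eq]
  have hch := measure_ge_le_exp_mul_mgf (μ := μ) (X := fun ω => ∑ j, X j ω)
    ((γ + ε) * n) ht hint
  calc (μ {ω | (γ + ε) * n ≤ ∑ j, X j ω}).toReal
      ≤ Real.exp (-t * ((γ + ε) * n)) * mgf (fun ω => ∑ j, X j ω) μ t := hch
    _ ≤ Real.exp (-t * ((γ + ε) * n)) * Real.exp (n * b) := by
        apply mul_le_mul_of_nonneg_left _ (Real.exp_nonneg _)
        rw [mgf]
        calc ∫ ω, Real.exp (t * ∑ j, X j ω) ∂μ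
            = ∫ ω, Real.exp (t * ∑ j : Fin n, if (j : ℕ) < n then X j ω else 0) ∂μ := by
              apply integral_congr_ae
              filter_upwards with ω
              rw [hsum_eq]
          _ ≤ Real.exp (n * b) := hfinal
    _ = Real.exp (-2 * n * ε ^ 2) := by
        rw [← Real.exp_add]
        congr 1
        rw [hbdef, htdef]
        ring
end
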